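/- arXiv:1306.0260 — 2 statements merged into one kernel-verified Lean document; each statement's English description precedes it below -/
import Mathlib

section
/- Consider the optimization problem: minimize Σ_{i=1}^m y_i^T R_i y_i over vectors y_1,...,y_m ∈ R^n and symmetric positive definite matrices R_1,...,R_m, subject to Σ_i R_i y_i = b and Σ_i R_i = S, where S is a given symmetric positive definite matrix and b a given vector. A feasible point (y_i, R_i)_{i=1}^m is optimal if and only if y_i = S^{-1} b for all i. Moreover, the optimal value equals b^T S^{-1} b. -/
open Matrix Finset

lemma dp_sum {n m : ℕ} (v : Fin n → ℝ) (f : Fin m → Fin n → ℝ) :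
    v ⬝ᵥ (∑ i, f i) = ∑ i, v ⬝ᵥ f i := by
  simp only [dotProduct, Finset.sum_apply, Finset.mul_sum]
  exact Finset.sum_comm

lemma sum_mv {n m : ℕ} (M : Fin m → Matrix (Fin n) (Fin n) ℝ) (z : Fin n → ℝ) :
    (∑ i, M i) *ᵥ z = ∑ i, M i *ᵥ z := by
  funext j
  simp only [Matrix.mulVec, dotProduct, Finset.sum_apply, Matrix.sum_apply, Finset.sum_mul]
  rw [Finset.sum_comm]

lemma sym_dp {n : ℕ} (M : Matrix (Fin n) (Fin n) ℝ) (hM : Mᵀ = M) (v w : Fin n → ℝ) :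
    v ⬝ᵥ (M *ᵥ w) = w ⬝ᵥ (M *ᵥ v) := by
  rw [Matrix.dotProduct_mulVec, ← Matrix.mulVec_transpose, hM, dotProduct_comm]

/-- a feasible point of the equality-constrained quadratic program is optimal
iff all `y i = S⁻¹ b`; the optimal value is `bᵀ S⁻¹ b`. -/
theorem stmt5 (n m : ℕ) (hn : 1 ≤ n) (hm : 1 ≤ m)
    (S : Matrix (Fin n) (Fin n) ℝ) (hS : S.PosDef) (b : Fin n → ℝ)
    (R : Fin m → Matrix (Fin n) (Fin n) ℝ) (y : Fin m → (Fin n → ℝ))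
    (hRpd : ∀ i, (R i).PosDef) (hRS : ∑ i, R i = S) (hRyb : ∑ i, (R i) *ᵥ y i = b) :
    ((∀ (R' : Fin m → Matrix (Fin n) (Fin n) ℝ) (y' : Fin m → (Fin n → ℝ)),
        (∀ i, (R' i).PosDef) → (∑ i, R' i = S) → (∑ i, (R' i) *ᵥ y' i = b) →
        ∑ i, y i ⬝ᵥ ((R i) *ᵥ y i) ≤ ∑ i, y' i ⬝ᵥ ((R' i) *ᵥ y' i))
      ↔ (∀ i, y i = S⁻¹ *ᵥ b)) ∧
    ((∀ i, y i = S⁻¹ *ᵥ b) →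
      ∑ i, y i ⬝ᵥ ((R i) *ᵥ y i) = b ⬝ᵥ (S⁻¹ *ᵥ b)) := by
  set z : Fin n → ℝ := S⁻¹ *ᵥ b with hzdef
  have hSz : S *ᵥ z = b := by
    rw [hzdef, Matrix.mulVec_mulVec,
      Matrix.mul_nonsing_inv _ (isUnit_iff_ne_zero.mpr hS.det_pos.ne'), Matrix.one_mulVec]
  -- key decomposition for any feasible point
  have key : ∀ (R' : Fin m → Matrix (Fin n) (Fin n) ℝ) (y' : Fin m → (Fin n → ℝ)),
      (∀ i, (R' i).PosDef) → (∑ i, R' i = S) → (∑ i, (R' i) *ᵥ y' i = b) →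
      ∑ i, y' i ⬝ᵥ ((R' i) *ᵥ y' i)
        = b ⬝ᵥ z + ∑ i, (y' i - z) ⬝ᵥ ((R' i) *ᵥ (y' i - z)) := by
    intro R' y' hpd hS' hb'
    have hsym : ∀ i, (R' i)ᵀ = R' i := fun i => by simpa [Matrix.IsSymm] using (hpd i).1
    have expand : ∀ i, (y' i - z) ⬝ᵥ ((R' i) *ᵥ (y' i - z))
        = y' i ⬝ᵥ (R' i *ᵥ y' i) - 2 * (z ⬝ᵥ (R' i *ᵥ y' i)) + z ⬝ᵥ (R' i *ᵥ z) := by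
      intro i
      rw [Matrix.mulVec_sub, dotProduct_sub, sub_dotProduct, sub_dotProduct,
        sym_dp _ (hsym i) (y' i) z]
      ring
    have h1 : ∑ i, z ⬝ᵥ (R' i *ᵥ y' i) = z ⬝ᵥ b := by
      rw [← hb', dp_sum]
    have h2 : ∑ i, z ⬝ᵥ (R' i *ᵥ z) = z ⬝ᵥ b := by
      rw [← dp_sum, ← sum_mv, hS', hSz]
    have hsum : ∑ i, (y' i - z) ⬝ᵥ ((R' i) *ᵥ (y' i - z))
        = ∑ i, y' i ⬝ᵥ (R' i *ᵥ y' i) - 2 * (z ⬝ᵥ b) + z ⬝ᵥ b := by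
      rw [Finset.sum_congr rfl (fun i _ => expand i)]
      rw [Finset.sum_add_distrib, Finset.sum_sub_distrib, ← Finset.mul_sum, h1, h2]
    rw [hsum, dotProduct_comm b z]
    ring
  have hbz : b ⬝ᵥ z = z ⬝ᵥ b := dotProduct_comm _ _
  -- the equalizing point is feasible with value b ⬝ᵥ z
  have hfeas : ∑ i, (R i) *ᵥ z = b := by rw [← sum_mv, hRS, hSz]
  have hval : ∑ i, z ⬝ᵥ ((R i) *ᵥ z) = b ⬝ᵥ z := by
    rw [← dp_sum, ← sum_mv, hRS, hSz, hbz]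
  constructor
  · constructor
    · -- optimal → equalizing
      intro hopt
      have hle : ∑ i, y i ⬝ᵥ ((R i) *ᵥ y i) ≤ b ⬝ᵥ z := by
        have := hopt R (fun _ => z) hRpd hRS hfeas
        rwa [hval] at this
      have hkey := key R y hRpd hRS hRyb
      have hq : ∑ i, (y i - z) ⬝ᵥ ((R i) *ᵥ (y i - z)) ≤ 0 := by linarith
      have hq0 : ∑ i, (y i - z) ⬝ᵥ ((R i) *ᵥ (y i - z)) = 0 :=
        le_antisymm hq (Finset.sum_nonneg fun i _ => by
          simpa using (hRpd i).posSemidef.re_dotProduct_nonneg (y i - z))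
      intro i
      by_contra hne
      have hpos : 0 < (y i - z) ⬝ᵥ ((R i) *ᵥ (y i - z)) := by
        simpa using (hRpd i).re_dotProduct_pos (sub_ne_zero.mpr hne)
      have : (0:ℝ) < ∑ i, (y i - z) ⬝ᵥ ((R i) *ᵥ (y i - z)) :=
        Finset.sum_pos' (fun j _ => by
            simpa using (hRpd j).posSemidef.re_dotProduct_nonneg (y j - z))
          ⟨i, Finset.mem_univ i, hpos⟩
      linarith
    · -- equalizing → optimal
      intro hy R' y' hpd hS' hb'
      have hvy : ∑ i, y i ⬝ᵥ ((R i) *ᵥ y i) = b ⬝ᵥ z := by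
        simp only [hy]; exact hval
      rw [hvy, key R' y' hpd hS' hb']
      have : 0 ≤ ∑ i, (y' i - z) ⬝ᵥ ((R' i) *ᵥ (y' i - z)) :=
        Finset.sum_nonneg fun i _ => by
          simpa using (hpd i).posSemidef.re_dotProduct_nonneg (y' i - z)
      linarith
  · intro hy
    simp only [hy]; exact hval
end

section
/- Let S ∈ S_+^n, b ∈ R^n, and suppose R_1,...,R_m ∈ S_+^n satisfy Σ_i R_i = S and y_1,...,y_m ∈ R^n satisfy Σ_i R_i y_i = b. Then Σ_i y_i^T R_i y_i ≥ b^T S^{-1} b. -/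
open Matrix Finset

lemma dot_sum {n : ℕ} {ι : Type*} (s : Finset ι) (x : Fin n → ℝ)
    (w : ι → Fin n → ℝ) : x ⬝ᵥ (∑ i ∈ s, w i) = ∑ i ∈ s, x ⬝ᵥ w i := by
  simp only [dotProduct, Finset.sum_apply, Finset.mul_sum]
  rw [Finset.sum_comm]

lemma sum_mv_s6 {n : ℕ} {ι : Type*} (s : Finset ι)
    (A : ι → Matrix (Fin n) (Fin n) ℝ) (x : Fin n → ℝ) :
    (∑ i ∈ s, A i) *ᵥ x = ∑ i ∈ s, A i *ᵥ x := by
  funext j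
  simp only [Matrix.mulVec, dotProduct, Finset.sum_apply, Matrix.sum_apply, Finset.sum_mul]
  rw [Finset.sum_comm]

lemma sym_dot {n : ℕ} (A : Matrix (Fin n) (Fin n) ℝ) (hA : A.IsHermitian)
    (u v : Fin n → ℝ) : u ⬝ᵥ (A *ᵥ v) = v ⬝ᵥ (A *ᵥ u) := by
  have hAt : Aᵀ = A := by
    have := hA.eq
    simpa [Matrix.conjTranspose_eq_transpose_of_trivial] using this
  nth_rewrite 1 [← hAt]
  rw [Matrix.dotProduct_mulVec, Matrix.vecMul_transpose, dotProduct_comm]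

/-- under the constraints `∑ R i = S`, `∑ R i y i = b`,
the objective is at least `bᵀ S⁻¹ b`. -/
theorem stmt6 (n m : ℕ) (hn : 1 ≤ n) (hm : 1 ≤ m)
    (S : Matrix (Fin n) (Fin n) ℝ) (hS : S.PosDef) (b : Fin n → ℝ)
    (R : Fin m → Matrix (Fin n) (Fin n) ℝ) (y : Fin m → (Fin n → ℝ))
    (hRpd : ∀ i, (R i).PosDef) (hRS : ∑ i, R i = S) (hRyb : ∑ i, (R i) *ᵥ y i = b) :
    b ⬝ᵥ (S⁻¹ *ᵥ b) ≤ ∑ i, y i ⬝ᵥ ((R i) *ᵥ y i) := by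
  set x := S⁻¹ *ᵥ b with hx
  have hSx : S *ᵥ x = b := by
    rw [hx, Matrix.mulVec_mulVec, Matrix.mul_nonsing_inv _ (isUnit_iff_ne_zero.mpr hS.det_pos.ne'),
      Matrix.one_mulVec]
  have key : ∀ i, 0 ≤ (y i - x) ⬝ᵥ (R i *ᵥ (y i - x)) := fun i => by
    have := (hRpd i).posSemidef.dotProduct_mulVec_nonneg (y i - x)
    simpa using this
  have expand : ∀ i, (y i - x) ⬝ᵥ (R i *ᵥ (y i - x))
      = y i ⬝ᵥ (R i *ᵥ y i) - 2 * (x ⬝ᵥ (R i *ᵥ y i)) + x ⬝ᵥ (R i *ᵥ x) := by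
    intro i
    have hsym := sym_dot (R i) (hRpd i).1 (y i) x
    simp [Matrix.mulVec_sub, dotProduct_sub, sub_dotProduct, hsym]
    ring
  have hsum : 0 ≤ ∑ i, (y i - x) ⬝ᵥ (R i *ᵥ (y i - x)) :=
    Finset.sum_nonneg fun i _ => key i
  have h1 : ∑ i, x ⬝ᵥ (R i *ᵥ y i) = x ⬝ᵥ b := by
    rw [← hRyb, dot_sum]
  have h2 : ∑ i, x ⬝ᵥ (R i *ᵥ x) = x ⬝ᵥ b := by
    rw [← hSx, ← hRS, sum_mv_s6, dot_sum]
  have h3 : b ⬝ᵥ x = x ⬝ᵥ b := dotProduct_comm _ _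
  have := hsum
  rw [Finset.sum_congr rfl (fun i _ => expand i)] at this
  rw [Finset.sum_add_distrib, Finset.sum_sub_distrib, ← Finset.mul_sum, h1, h2] at this
  rw [h3]
  linarith
end
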